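/- With comultiplication Δ: A → A ⊗ A given by Δ(1) = 1⊗X + X⊗1 - h·(1⊗1) and Δ(X) = X⊗X + a·(1⊗1), the pair (m, Δ) satisfies the Frobenius condition: Δ∘m = (m⊗id)∘(id⊗Δ) = (id⊗m)∘(Δ⊗id). -/

import Mathlib

noncomputable section

open Polynomial TensorProduct

abbrev R : Type := MvPolynomial (Fin 2) GaussianInt
abbrev aR : R := MvPolynomial.X 0
abbrev hR : R := MvPolynomial.X 1
abbrev fpoly : Polynomial R := Polynomial.X ^ 2 - Polynomial.C hR * Polynomial.X - Polynomial.C aR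
abbrev A : Type := AdjoinRoot fpoly
abbrev XA : A := AdjoinRoot.root fpoly

lemma fdeglt : (Polynomial.C hR * Polynomial.X + Polynomial.C aR).degree < ((2:ℕ) : WithBot ℕ) := by
  apply lt_of_le_of_lt (Polynomial.degree_add_le _ _)
  rw [max_lt_iff]
  exact ⟨lt_of_le_of_lt (Polynomial.degree_C_mul_X_le _) (by norm_num),
    lt_of_le_of_lt Polynomial.degree_C_le (by norm_num)⟩

lemma fsplit : fpoly = Polynomial.X ^ 2 - (Polynomial.C hR * Polynomial.X + Polynomial.C aR) := by
  ring

lemma fmonic : fpoly.Monic := by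
  rw [fsplit]
  apply Polynomial.monic_X_pow_sub
  exact fdeglt

lemma fdim : fpoly.natDegree = 2 := by
  have hd : fpoly.degree = 2 := by
    rw [fsplit, Polynomial.degree_sub_eq_left_of_degree_lt, Polynomial.degree_X_pow]
    · rfl
    · rw [Polynomial.degree_X_pow]; exact fdeglt
  exact Polynomial.natDegree_eq_of_degree_eq_some hd

lemma hX2 : XA * XA = hR • XA + aR • (1:A) := by
  have h := AdjoinRoot.eval₂_root fpoly
  simp only [fpoly, Polynomial.eval₂_sub, Polynomial.eval₂_pow,
    Polynomial.eval₂_mul, Polynomial.eval₂_C, Polynomial.eval₂_X] at h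
  rw [Algebra.smul_def, Algebra.smul_def, AdjoinRoot.algebraMap_eq]
  linear_combination h

lemma ext2 {M : Type*} [AddCommMonoid M] [Module R M] (F G : A ⊗[R] A →ₗ[R] M)
    (h11 : F (1 ⊗ₜ 1) = G (1 ⊗ₜ 1)) (h1X : F (1 ⊗ₜ XA) = G (1 ⊗ₜ XA))
    (hX1 : F (XA ⊗ₜ 1) = G (XA ⊗ₜ 1)) (hXX : F (XA ⊗ₜ XA) = G (XA ⊗ₜ XA)) : F = G := by
  set pb := AdjoinRoot.powerBasis' fmonic with hpb
  have hb : ∀ k : Fin pb.dim, pb.basis k = XA ^ (k : ℕ) := fun k => pb.basis_eq_pow k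
  have hdim : pb.dim = 2 := fdim
  apply TensorProduct.ext
  apply pb.basis.ext; intro i
  apply pb.basis.ext; intro j
  have hi : (i : ℕ) = 0 ∨ (i : ℕ) = 1 := by have h2 := i.2; omega
  have hj : (j : ℕ) = 0 ∨ (j : ℕ) = 1 := by have h2 := j.2; omega
  rcases hi with hi | hi <;> rcases hj with hj | hj <;>
    simp only [LinearMap.compr₂_apply, TensorProduct.mk_apply, hb, hi, hj, pow_zero,
      pow_one] <;> assumption

set_option maxHeartbeats 1000000 in
/-- With `Δ(1) = 1⊗X + X⊗1 - h·(1⊗1)` and `Δ(X) = X⊗X + a·(1⊗1)`, the pair `(m, Δ)`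
satisfies the Frobenius condition `Δ∘m = (m⊗id)∘(id⊗Δ) = (id⊗m)∘(Δ⊗id)`. -/
theorem frobenius_condition (Δ : A →ₗ[R] A ⊗[R] A)
    (hΔ1 : Δ 1 = 1 ⊗ₜ XA + XA ⊗ₜ 1 - hR • (1 ⊗ₜ 1))
    (hΔX : Δ XA = XA ⊗ₜ XA + aR • (1 ⊗ₜ 1)) :
    Δ ∘ₗ LinearMap.mul' R A =
        (TensorProduct.map (LinearMap.mul' R A) LinearMap.id) ∘ₗ
          (TensorProduct.assoc R A A A).symm.toLinearMap ∘ₗ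
            (TensorProduct.map LinearMap.id Δ) ∧
      (TensorProduct.map (LinearMap.mul' R A) LinearMap.id) ∘ₗ
          (TensorProduct.assoc R A A A).symm.toLinearMap ∘ₗ
            (TensorProduct.map LinearMap.id Δ) =
        (TensorProduct.map LinearMap.id (LinearMap.mul' R A)) ∘ₗ
          (TensorProduct.assoc R A A A).toLinearMap ∘ₗ
            (TensorProduct.map Δ LinearMap.id) := by
  constructor <;>
    apply ext2 <;>
    · simp only [LinearMap.coe_comp, Function.comp_apply, LinearMap.mul'_apply,
        TensorProduct.map_tmul, LinearMap.id_coe, id_eq,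
        one_mul, mul_one, hΔ1, hΔX, hX2, tmul_add, tmul_sub, tmul_smul, smul_tmul',
        add_tmul, sub_tmul, LinearMap.map_add, LinearMap.map_sub, LinearMap.map_smul]
      simp only [LinearEquiv.coe_coe, TensorProduct.assoc_symm_tmul, TensorProduct.assoc_tmul,
        TensorProduct.map_tmul, LinearMap.mul'_apply, LinearMap.id_coe, id_eq, one_mul, mul_one,
        hΔ1, hΔX, hX2, tmul_add, tmul_sub, tmul_smul, smul_tmul', add_tmul, sub_tmul,
        LinearMap.map_add, LinearMap.map_sub, LinearMap.map_smul, map_add, map_sub, map_smul]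
      try simp only [← TensorProduct.smul_tmul', TensorProduct.tmul_smul]
      try module
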